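/- arXiv:0808.2822 — 2 statements merged into one kernel-verified Lean document; each statement's English description precedes it below -/
import Mathlib

section
/- For every n ≥ 1 and every integer k with 0 ≤ k ≤ 2n², the number of Dyck paths of type B_n with type B major index k equals the number of Dyck paths of type B_n with type B major index 2n² − k; that is, the generating polynomial Σ_w q^{maj(w)} over type B_n Dyck paths has a symmetric sequence of coefficients centered at n². -/
open scoped Classical

namespace Stmt

/-- Number of north steps (`true`) among the first `k` steps of the path `w`. -/
def countN {m : ℕ} (w : Fin m → Bool) (k : ℕ) : ℕ :=
  (Finset.univ.filter (fun t : Fin m => (t : ℕ) < k ∧ w t = true)).card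

/-- Number of east steps (`false`) among the first `k` steps of the path `w`. -/
def countE {m : ℕ} (w : Fin m → Bool) (k : ℕ) : ℕ :=
  (Finset.univ.filter (fun t : Fin m => (t : ℕ) < k ∧ w t = false)).card

/-- A Dyck path of length `n`: `n` north and `n` east steps, every prefix has
at least as many north as east steps. -/
def IsDyckA (n : ℕ) (w : Fin (2 * n) → Bool) : Prop :=
  countN w (2 * n) = n ∧ ∀ k : ℕ, countE w k ≤ countN w k

/-- A Dyck path of type `B_n`: `2n` steps, every prefix has at least as many
north as east steps. -/
def IsDyckB (n : ℕ) (w : Fin (2 * n) → Bool) : Prop :=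
  ∀ k : ℕ, countE w k ≤ countN w k

/-- The unit cell `[i-1,i] × [j-1,j]` lies below the lattice path `w`:
at some time the path has `x`-coordinate `< i` and `y`-coordinate `≥ j`. -/
def CellBelow {m : ℕ} (w : Fin m → Bool) (i j : ℕ) : Prop :=
  ∃ k : ℕ, countE w k < i ∧ j ≤ countN w k

/-- Area of a (type `A`) Dyck path: number of cells `b_{i,j}` with `i < j`
lying below the path. -/
noncomputable def areaA {m : ℕ} (w : Fin m → Bool) : ℕ :=
  {p : ℕ × ℕ | 1 ≤ p.1 ∧ p.1 < p.2 ∧ CellBelow w p.1 p.2}.ncard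

/-- Area of a type `B_n` Dyck path: number of cells `b_{i,j}` with
`1 ≤ i < j ≤ 2n+1-i` lying below the path. -/
noncomputable def areaB (n : ℕ) (w : Fin (2 * n) → Bool) : ℕ :=
  {p : ℕ × ℕ | 1 ≤ p.1 ∧ p.1 < p.2 ∧ p.2 ≤ 2 * n + 1 - p.1 ∧
    CellBelow w p.1 p.2}.ncard

/-- Descent set of a path, 1-indexed: positions `i` with `w_i = E`, `w_{i+1} = N`. -/
def pathDes {m : ℕ} (w : Fin m → Bool) : Finset ℕ :=
  (Finset.Ioo 0 m).filter (fun i =>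
    ∃ h : i < m, w ⟨i - 1, Nat.lt_of_le_of_lt (Nat.sub_le i 1) h⟩ = false ∧ w ⟨i, h⟩ = true)

def desPath {m : ℕ} (w : Fin m → Bool) : ℕ := (pathDes w).card

/-- Major index of a Dyck path of length `n`: `maj(w) = ∑_{i ∈ Des(w)} (2n - i)`. -/
def majA (n : ℕ) (w : Fin (2 * n) → Bool) : ℕ :=
  ∑ i ∈ pathDes w, (2 * n - i)

/-- Number of east steps of a path. -/
def negPath {m : ℕ} (w : Fin m → Bool) : ℕ :=
  (Finset.univ.filter (fun t : Fin m => w t = false)).card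

/-- Type `B` major index: `maj(w) = 2 ⬝ (neg(w) + ∑_{i ∈ Des(w)} (2n - i))`. -/
def majB (n : ℕ) (w : Fin (2 * n) → Bool) : ℕ :=
  2 * (negPath w + ∑ i ∈ pathDes w, (2 * n - i))

open Polynomial


/-- The Gaussian binomial coefficient `[m choose k]_q` as a polynomial in `X` over `ℤ`. -/
noncomputable def gbP : ℕ → ℕ → Polynomial ℤ
  | _, 0 => 1
  | 0, _ + 1 => 0
  | m + 1, k + 1 => gbP m k + X ^ (k + 1) * gbP m (k + 1)

@[simp] lemma gbP_zero_right (m : ℕ) : gbP m 0 = 1 := by cases m <;> rfl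

lemma gbP_P1 (m k : ℕ) : gbP (m + 1) (k + 1) = gbP m k + X ^ (k + 1) * gbP m (k + 1) := rfl

lemma gbP_big : ∀ m k : ℕ, m < k → gbP m k = 0 := by
  intro m
  induction m with
  | zero => intro k hk; match k, hk with
            | (k+1), _ => rfl
  | succ m ih =>
    intro k hk
    match k, hk with
    | (k+1), hk =>
      rw [gbP_P1, ih k (by omega), ih (k+1) (by omega)]
      ring

lemma gbP_self : ∀ m : ℕ, gbP m m = 1 := by
  intro m
  induction m with
  | zero => rfl
  | succ m ih => rw [gbP_P1, ih, gbP_big m (m+1) (by omega)]; ring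

/-- Second Pascal rule. -/
lemma gbP_P2 : ∀ m c d : ℕ, c + d = m →
    gbP (m + 1) (c + 1) = gbP m (c + 1) + X ^ d * gbP m c := by
  intro m
  induction m with
  | zero =>
    intro c d h
    have hc : c = 0 := by omega
    have hd : d = 0 := by omega
    subst hc; subst hd
    rw [gbP_P1]
    simp [gbP_big 0 1 (by omega)]
  | succ m ih =>
    intro c d h
    match c with
    | 0 =>
      have hd : d = m + 1 := by omega
      subst hd
      have e2 := gbP_P1 m 0
      have e3 := ih 0 m (by omega)
      rw [gbP_P1 (m+1) 0]
      simp only [gbP_zero_right] at e2 e3 ⊢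
      linear_combination (X : Polynomial ℤ) * e3 - e2
    | c' + 1 =>
      match d with
      | 0 =>
        have hc : c' = m := by omega
        subst hc
        show gbP (c'+2) (c'+2) = gbP (c'+1) (c'+2) + X ^ 0 * gbP (c'+1) (c'+1)
        rw [gbP_self (c'+2), gbP_self (c'+1), gbP_big (c'+1) (c'+2) (by omega)]
        ring
      | d' + 1 =>
        have h1 : c' + d' + 1 = m := by omega
        have key : gbP m (c' + 1) + X ^ (c' + 1 + 1) * gbP m (c' + 1 + 1)
            = gbP m (c' + 1 + 1) + X ^ d' * gbP m (c' + 1) :=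
          (gbP_P1 m (c' + 1)).symm.trans (ih (c' + 1) d' (by omega))
        have e1 := gbP_P1 (m + 1) (c' + 1)
        have e2 := ih c' (d' + 1) (by omega)
        have e3 := ih (c' + 1) d' (by omega)
        have e4 := gbP_P1 m c'
        -- goal: gbP (m+2) (c'+2) = gbP (m+1) (c'+2) + X^(d'+1) * gbP (m+1) (c'+1)
        linear_combination e1 + e2 - (X:Polynomial ℤ)^(d'+1) * e4 + ((X:Polynomial ℤ)^(c'+1+1) - 1) * e3 + key

lemma gbP_SY : ∀ m k d : ℕ, k + d = m → gbP m k = gbP m d := by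
  intro m
  induction m using Nat.strong_induction_on with
  | _ m ih =>
    intro k d h
    match k, d with
    | 0, d => subst h; simp [gbP_self]
    | k + 1, 0 => subst h; simp [gbP_self]
    | k + 1, d + 1 =>
      have hm : m = k + d + 2 := by omega
      subst hm
      have e1 := gbP_P1 (k+d+1) k
      have e2 := gbP_P2 (k+d+1) d (k+1) (by omega)
      have e3 := ih (k+d+1) (by omega) k (d+1) (by omega)
      have e4 := ih (k+d+1) (by omega) (k+1) d (by omega)
      show gbP (k+d+1+1) (k+1) = gbP (k+d+1+1) (d+1)
      linear_combination e1 - e2 + e3 + (X:Polynomial ℤ)^(k+1) * e4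



lemma gbP_T' (m c : ℕ) :
    X ^ (c + 1) * gbP (m + 1) (c + 1) + gbP m c
      = gbP (m + 1) (c + 1) + X ^ (m + 1) * gbP m c := by
  rcases le_or_gt c m with hcm | hcm
  · obtain ⟨d, rfl⟩ : ∃ d, m = c + d := ⟨m - c, by omega⟩
    have h1 := gbP_P1 (c + d) c
    have h2 := gbP_P2 (c + d) c d rfl
    linear_combination (-1 : Polynomial ℤ) * h1 + (X : Polynomial ℤ) ^ (c + 1) * h2
  · rw [gbP_big m c (by omega), gbP_big (m+1) (c+1) (by omega)]
    ring

lemma gbP_T (l c : ℕ) :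
    gbP (l + 2) (c + 1) + gbP l c
      = gbP (l + 1) (c + 1) + X ^ (l + 1) * gbP l c + gbP (l + 1) c := by
  have h1 := gbP_P1 (l + 1) c
  have h2 := gbP_T' l c
  linear_combination h1 + h2

/-- The conjectured closed form for the statistic generating function. -/
noncomputable def ghat (h l : ℕ) : Polynomial ℤ :=
  gbP l ((l + 1) / 2) +
    ∑ t ∈ Finset.Icc 1 h, X ^ ((l + t + 1) / 2) * gbP l ((l + t + 1) / 2)

lemma ghat_zero (l : ℕ) : ghat 0 l = gbP l ((l + 1) / 2) := by
  simp [ghat]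

lemma ghat_succ (h l : ℕ) :
    ghat (h + 1) l = ghat h l + X ^ ((l + h + 2) / 2) * gbP l ((l + h + 2) / 2) := by
  rw [ghat, ghat, Finset.sum_Icc_succ_top (by omega : 1 ≤ h + 1)]
  rw [show l + (h + 1) + 1 = l + h + 2 by omega]
  ring

lemma ghat_L0 (l : ℕ) : ghat 1 l = ghat 0 (l + 1) := by
  rw [ghat_succ, ghat_zero, ghat_zero]
  obtain ⟨a, rfl | rfl⟩ := Nat.even_or_odd' l
  · simp only [show (2 * a + 1) / 2 = a by omega, show (2 * a + 0 + 2) / 2 = a + 1 by omega,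
      show (2 * a + 1 + 1) / 2 = a + 1 by omega]
    have h1 := gbP_P1 (2 * a) a
    linear_combination -h1
  · simp only [show (2 * a + 1 + 1) / 2 = a + 1 by omega,
      show (2 * a + 1 + 0 + 2) / 2 = a + 1 by omega,
      show (2 * a + 1 + 1 + 1) / 2 = a + 1 by omega]
    have h1 := gbP_P1 (2 * a + 1) a
    have h2 := gbP_SY (2 * a + 1) a (a + 1) (by omega)
    rw [show 2 * a + 1 + 1 = 2 * a + 2 by omega] at h1 ⊢
    linear_combination -h1 - h2

lemma ghat_rec : ∀ h l : ℕ,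
    ghat (h + 1) (l + 2) + X * ghat (h + 1) l
      = ghat (h + 2) (l + 1) + X ^ (l + 2) * ghat (h + 1) l + X * ghat h (l + 1) := by
  intro h
  induction h with
  | zero =>
    intro l
    rw [ghat_succ 0 (l+2), ghat_succ 0 l, ghat_succ 1 (l+1), ghat_succ 0 (l+1)]
    simp only [ghat_zero]
    obtain ⟨a, rfl | rfl⟩ := Nat.even_or_odd' l
    · simp only [show (2*a+2+1)/2 = a + 1 by omega, show (2*a+2+0+2)/2 = a+2 by omega,
        show (2*a+1)/2 = a by omega, show (2*a+0+2)/2 = a+1 by omega,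
        show (2*a+1+1)/2 = a+1 by omega, show (2*a+1+0+2)/2 = a+1 by omega,
        show (2*a+1+1+2)/2 = a+2 by omega]
      have i1 := gbP_P1 (2*a+1) a
      have i2 := gbP_SY (2*a+1) a (a+1) (by omega)
      have i3 := gbP_T (2*a) (a+1)
      have i4 := gbP_T' (2*a) a
      rw [show 2*a+1+1 = 2*a+2 by omega] at i1
      rw [show a+1+1 = a+2 by omega] at i3
      linear_combination i1 + i2 + (X:Polynomial ℤ)^(a+2) * i3 + (X:Polynomial ℤ) * i4
    · simp only [show (2*a+1+2+1)/2 = a + 2 by omega, show (2*a+1+2+0+2)/2 = a+2 by omega,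
        show (2*a+1+1)/2 = a+1 by omega, show (2*a+1+0+2)/2 = a+1 by omega,
        show (2*a+1+1+1)/2 = a+1 by omega, show (2*a+1+1+0+2)/2 = a+2 by omega,
        show (2*a+1+1+1+2)/2 = a+2 by omega]
      rw [show 2*a+1+2 = 2*a+3 by omega, show 2*a+1+1 = 2*a+2 by omega]
      have j1 := gbP_P1 (2*a+2) (a+1)
      have j2 := gbP_T (2*a+1) (a+1)
      have j3 := gbP_T' (2*a+1) a
      have j4 := gbP_SY (2*a+1) a (a+1) (by omega)
      rw [show 2*a+2+1 = 2*a+3 by omega, show a+1+1 = a+2 by omega] at j1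
      rw [show 2*a+1+2 = 2*a+3 by omega, show 2*a+1+1 = 2*a+2 by omega,
        show a+1+1 = a+2 by omega] at j2
      rw [show 2*a+1+1 = 2*a+2 by omega] at j3
      linear_combination j1 + (X:Polynomial ℤ)^(a+2) * j2 + (X:Polynomial ℤ) * j3
        + ((X:Polynomial ℤ)^(2*a+3) - X) * j4
  | succ h ih =>
    intro l
    rw [ghat_succ (h+1) (l+2), ghat_succ (h+1) l, ghat_succ (h+2) (l+1), ghat_succ h (l+1)]
    set q := (l + h + 3) / 2 with hq
    rw [show (l+2+(h+1)+2)/2 = q + 1 by omega, show (l+(h+1)+2)/2 = q by omega,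
      show (l+1+(h+2)+2)/2 = q + 1 by omega, show (l+1+h+2)/2 = q by omega]
    have tq := gbP_T l q
    linear_combination ih l + (X:Polynomial ℤ)^(q+1) * tq

lemma gbP_coeff_ite (m k j : ℕ) :
    (gbP (m+1) (k+1)).coeff j
      = (gbP m k).coeff j
        + (if k + 1 ≤ j then (gbP m (k+1)).coeff (j - (k+1)) else 0) := by
  rw [gbP_P1, Polynomial.coeff_add, mul_comm, Polynomial.coeff_mul_X_pow']

lemma gbP_vanish : ∀ m k j : ℕ, k * (m - k) < j → (gbP m k).coeff j = 0 := by
  intro m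
  induction m with
  | zero =>
    intro k j hj
    match k with
    | 0 => rw [gbP_zero_right, Polynomial.coeff_one, if_neg (by omega)]
    | k + 1 => show (0 : Polynomial ℤ).coeff j = 0; simp
  | succ m ih =>
    intro k j hj
    match k with
    | 0 =>
      rw [gbP_zero_right, Polynomial.coeff_one, if_neg (by omega)]
    | k + 1 =>
      rw [gbP_coeff_ite]
      rcases le_or_gt m k with hmk | hmk
      · rw [gbP_big m (k+1) (by omega)]
        have h1 : (gbP m k).coeff j = 0 := by
          rcases eq_or_lt_of_le hmk with h | h
          · subst h
            rw [gbP_self, Polynomial.coeff_one, if_neg (by omega)]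
          · rw [gbP_big m k h]; simp
        rw [h1]
        simp
      · -- k < m
        have e : (k+1) * (m + 1 - (k+1)) = (k+1) * (m - (k+1)) + (k + 1) := by
          rw [show m + 1 - (k+1) = (m - (k+1)) + 1 by omega]
          ring
        rw [e] at hj
        have h1 : (gbP m k).coeff j = 0 := by
          apply ih
          have : k * (m - k) ≤ (k+1) * (m - (k+1)) + (k+1) := by
            rw [show m - k = (m - (k+1)) + 1 by omega]
            nlinarith [Nat.zero_le (m - (k+1))]
          omega
        rw [h1]
        split
        · next hk =>
          rw [ih (k+1) (j - (k+1)) (by omega)]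
          simp
        · simp

lemma gbP_palin : ∀ m k d j j' : ℕ, k + d = m → j + j' = k * d →
    (gbP m k).coeff j = (gbP m k).coeff j' := by
  intro m
  induction m with
  | zero =>
    intro k d j j' hm hj
    have : k = 0 ∧ d = 0 := by omega
    have : j = 0 ∧ j' = 0 := by
      simp [this.1] at hj; omega
    simp [this.1, this.2]
  | succ m ih =>
    intro k d j j' hm hj
    match k with
    | 0 =>
      simp only [Nat.zero_mul] at hj
      have : j = 0 ∧ j' = 0 := by omega
      simp [this.1, this.2]
    | k + 1 =>
      match d with
      | 0 =>
        simp only [Nat.mul_zero] at hj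
        have : j = 0 ∧ j' = 0 := by omega
        simp [this.1, this.2]
      | d =>
      rcases Nat.eq_zero_or_pos d with hd0 | hd0
      · subst hd0
        simp only [Nat.mul_zero] at hj
        have : j = 0 ∧ j' = 0 := by omega
        simp [this.1, this.2]
      · -- d ≥ 1, k + 1 + d = m + 1, so k + d = m
        have hkd : k + d = m := by omega
        have hP2 := gbP_P2 m k d hkd
        have lhs := gbP_coeff_ite m k j
        -- expand coeff j' via P2
        have rhs : (gbP (m+1) (k+1)).coeff j'
            = (gbP m (k+1)).coeff j'
              + (if d ≤ j' then (gbP m k).coeff (j' - d) else 0) := by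
          rw [hP2, Polynomial.coeff_add, mul_comm, Polynomial.coeff_mul_X_pow']
        rw [lhs, rhs]
        have he : (k+1) * d = k * d + d := by ring
        have claim1 : (gbP m k).coeff j
            = (if d ≤ j' then (gbP m k).coeff (j' - d) else 0) := by
          rcases le_or_gt j (k * d) with h | h
          · rw [if_pos (by omega)]
            exact ih k d j (j' - d) hkd (by omega)
          · rw [gbP_vanish m k j (by rw [show m - k = d by omega]; omega)]
            rw [if_neg (by omega)]
        obtain ⟨e, rfl⟩ : ∃ e, d = e + 1 := ⟨d - 1, by omega⟩
        have he2 : (k+1) * e + (k + 1) = (k + 1) * (e + 1) := by ring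
        have claim2 : (if k + 1 ≤ j then (gbP m (k+1)).coeff (j - (k+1)) else 0)
            = (gbP m (k+1)).coeff j' := by
          rcases le_or_gt (k+1) j with h | h
          · rw [if_pos h]
            exact ih (k+1) e (j - (k+1)) j' (by omega) (by omega)
          · rw [if_neg (by omega)]
            rw [gbP_vanish m (k+1) j' (by rw [show m - (k+1) = e by omega]; omega)]
        rw [claim1, claim2]
        ring


/-! ### Combinatorial layer -/

def okF {m : ℕ} (h : ℕ) (w : Fin m → Bool) : Prop :=
  ∀ k, countE w k ≤ countN w k + h

noncomputable def dsumF {m : ℕ} (w : Fin m → Bool) : ℕ := ∑ i ∈ pathDes w, (m - i)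

noncomputable def fstF {m : ℕ} (w : Fin m → Bool) : ℕ := countE w m + dsumF w

lemma countE_zero {m : ℕ} (w : Fin m → Bool) : countE w 0 = 0 := by
  simp [countE]

lemma countN_zero {m : ℕ} (w : Fin m → Bool) : countN w 0 = 0 := by
  simp [countN]

lemma count_empty (w : Fin 0 → Bool) (k : ℕ) : countE w k = 0 ∧ countN w k = 0 := by
  constructor <;> simp [countE, countN]

lemma countE_succ {l : ℕ} (b : Bool) (v : Fin l → Bool) (k : ℕ) :
    countE (Fin.cons b v) (k + 1) = (if b = false then 1 else 0) + countE v k := by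
  rw [countE, countE, Finset.card_filter, Finset.card_filter, Fin.sum_univ_succ]
  congr 1
  · simp [Fin.cons_zero]
  · apply Finset.sum_congr rfl
    intro i _
    simp [Fin.cons_succ, Fin.val_succ, Nat.add_lt_add_iff_right]

lemma countN_succ {l : ℕ} (b : Bool) (v : Fin l → Bool) (k : ℕ) :
    countN (Fin.cons b v) (k + 1) = (if b = true then 1 else 0) + countN v k := by
  rw [countN, countN, Finset.card_filter, Finset.card_filter, Fin.sum_univ_succ]
  congr 1
  · simp [Fin.cons_zero]
  · apply Finset.sum_congr rfl
    intro i _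
    simp [Fin.cons_succ, Fin.val_succ, Nat.add_lt_add_iff_right]

lemma okF_cons_true {l : ℕ} (h : ℕ) (v : Fin l → Bool) :
    okF h (Fin.cons true v) ↔ okF (h + 1) v := by
  constructor
  · intro H k
    have := H (k + 1)
    rw [countE_succ, countN_succ] at this
    simp at this
    omega
  · intro H k
    cases k with
    | zero => rw [countE_zero, countN_zero]; omega
    | succ k =>
      rw [countE_succ, countN_succ]
      have := H k
      simp
      omega

lemma okF_cons_false {l : ℕ} (h : ℕ) (v : Fin l → Bool) :
    okF (h + 1) (Fin.cons false v) ↔ okF h v := by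
  constructor
  · intro H k
    have := H (k + 1)
    rw [countE_succ, countN_succ] at this
    simp at this
    omega
  · intro H k
    cases k with
    | zero => rw [countE_zero, countN_zero]; omega
    | succ k =>
      rw [countE_succ, countN_succ]
      have := H k
      simp
      omega

lemma not_okF_cons_false {l : ℕ} (v : Fin l → Bool) : ¬ okF 0 (Fin.cons false v) := by
  intro H
  have := H (0 + 1)
  rw [countE_succ, countN_succ, countE_zero, countN_zero] at this
  simp at this

lemma okF_empty (h : ℕ) (w : Fin 0 → Bool) : okF h w := by
  intro k
  rw [(count_empty w k).1, (count_empty w k).2]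
  omega

def wval {m : ℕ} (w : Fin m → Bool) (i : ℕ) : Bool :=
  if h : i < m then w ⟨i, h⟩ else true

lemma wval_cons_zero {l : ℕ} (b : Bool) (v : Fin l → Bool) :
    wval (Fin.cons b v) 0 = b := by
  rw [wval, dif_pos (by omega : 0 < l + 1)]
  have e : (⟨0, by omega⟩ : Fin (l + 1)) = 0 := rfl
  rw [e, Fin.cons_zero]

lemma wval_cons_succ {l : ℕ} (b : Bool) (v : Fin l → Bool) (j : ℕ) :
    wval (Fin.cons b v) (j + 1) = wval v j := by
  by_cases h : j < l
  · rw [wval, dif_pos (by omega : j + 1 < l + 1), wval, dif_pos h]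
    have e : (⟨j + 1, by omega⟩ : Fin (l + 1)) = Fin.succ ⟨j, h⟩ := by
      apply Fin.ext; simp
    rw [e, Fin.cons_succ]
  · rw [wval, dif_neg (by omega), wval, dif_neg h]

lemma dsumF_eq {m : ℕ} (w : Fin m → Bool) :
    dsumF w = ∑ i ∈ Finset.Ioo 0 m,
      (if wval w (i - 1) = false ∧ wval w i = true then m - i else 0) := by
  rw [dsumF, pathDes, Finset.sum_filter]
  apply Finset.sum_congr rfl
  intro i hi
  rw [Finset.mem_Ioo] at hi
  refine if_congr ⟨?_, ?_⟩ rfl rfl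
  · rintro ⟨hh, hA, hB⟩
    rw [wval, dif_pos (by omega : i - 1 < m), wval, dif_pos hi.2]
    exact ⟨hA, hB⟩
  · rintro ⟨hA, hB⟩
    rw [wval, dif_pos (by omega : i - 1 < m)] at hA
    rw [wval, dif_pos hi.2] at hB
    exact ⟨hi.2, hA, hB⟩

lemma dsumF_small {m : ℕ} (hm : m ≤ 1) (w : Fin m → Bool) : dsumF w = 0 := by
  rw [dsumF_eq]
  have : Finset.Ioo 0 m = ∅ := by
    apply Finset.eq_empty_of_forall_notMem
    intro i hi
    rw [Finset.mem_Ioo] at hi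
    omega
  rw [this]
  simp

lemma dsumF_cons {l : ℕ} (b : Bool) (v : Fin (l + 1) → Bool) :
    dsumF (Fin.cons b v)
      = (if b = false ∧ v 0 = true then l + 1 else 0) + dsumF v := by
  rw [dsumF_eq, dsumF_eq]
  have hsplit : Finset.Ioo 0 (l + 2) = insert 1 (Finset.Ioo 1 (l + 2)) := by
    ext i
    simp only [Finset.mem_Ioo, Finset.mem_insert]
    omega
  rw [hsplit, Finset.sum_insert (by simp)]
  refine congrArg₂ (· + ·) ?_ ?_
  · -- the i = 1 term
    have h1 : wval (Fin.cons b v) 1 = wval v 0 := by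
      simpa using wval_cons_succ b v 0
    have hv0 : wval v 0 = v 0 := by
      rw [wval, dif_pos (by omega : 0 < l + 1)]
      have e : (⟨0, by omega⟩ : Fin (l + 1)) = 0 := rfl
      rw [e]
    rw [show (1:ℕ) - 1 = 0 from rfl, wval_cons_zero, h1, hv0,
      show l + 1 + 1 - 1 = l + 1 from by omega]
  · -- shift the rest
    apply Finset.sum_nbij' (fun i => i - 1) (fun j => j + 1)
    · intro i hi
      rw [Finset.mem_Ioo] at hi ⊢
      omega
    · intro j hj
      rw [Finset.mem_Ioo] at hj ⊢
      omega
    · intro i hi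
      rw [Finset.mem_Ioo] at hi
      omega
    · intro j _
      omega
    · intro i hi
      rw [Finset.mem_Ioo] at hi
      obtain ⟨j, rfl⟩ : ∃ j, i = j + 1 + 1 := ⟨i - 2, by omega⟩
      rw [show j + 1 + 1 - 1 = j + 1 from rfl, wval_cons_succ, wval_cons_succ,
        show j + 1 - 1 = j from rfl]
      congr 1
      omega

lemma fstF_empty (w : Fin 0 → Bool) : fstF w = 0 := by
  rw [fstF, (count_empty w 0).1, dsumF_small (by omega)]

lemma fstF_cons_true {l : ℕ} (v : Fin l → Bool) : fstF (Fin.cons true v) = fstF v := by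
  rw [fstF, fstF, countE_succ]
  simp only [if_neg (by simp : ¬ (true = false)), Nat.zero_add]
  congr 1
  cases l with
  | zero => rw [dsumF_small (by omega), dsumF_small (by omega)]
  | succ l =>
    rw [dsumF_cons]
    simp

lemma fstF_cons_false {l : ℕ} (v : Fin (l + 1) → Bool) :
    fstF (Fin.cons false v) = 1 + fstF v + (if v 0 = true then l + 1 else 0) := by
  rw [fstF, fstF, countE_succ, dsumF_cons]
  by_cases hv : v 0 = true <;> simp [hv] <;> omega

lemma fstF_cons_false0 (v : Fin 0 → Bool) : fstF (Fin.cons false v) = 1 := by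
  rw [fstF, countE_succ, dsumF_small (by omega), (count_empty v 0).1]
  simp

noncomputable def GP (h l : ℕ) : Polynomial ℤ :=
  ∑ w : Fin l → Bool, if okF h w then X ^ fstF w else 0

noncomputable def GPT (h l : ℕ) : Polynomial ℤ :=
  ∑ w : Fin (l + 1) → Bool, if okF h w ∧ w 0 = true then X ^ fstF w else 0

noncomputable def GPF (h l : ℕ) : Polynomial ℤ :=
  ∑ w : Fin (l + 1) → Bool, if okF h w ∧ w 0 = false then X ^ fstF w else 0

lemma sum_cons {l : ℕ} (f : (Fin (l + 1) → Bool) → Polynomial ℤ) :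
    (∑ w : Fin (l + 1) → Bool, f w)
      = (∑ v : Fin l → Bool, f (Fin.cons true v)) + ∑ v : Fin l → Bool, f (Fin.cons false v) := by
  rw [← Equiv.sum_comp (Fin.consEquiv (fun _ => Bool)) f, Fintype.sum_prod_type,
    Fintype.sum_bool]
  rfl

lemma GP_zero (h : ℕ) : GP h 0 = 1 := by
  rw [GP, Fintype.sum_unique, if_pos (okF_empty h _), fstF_empty, pow_zero]

lemma GP_split (h l : ℕ) : GP h (l + 1) = GPT h l + GPF h l := by
  rw [GP, GPT, GPF, ← Finset.sum_add_distrib]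
  apply Finset.sum_congr rfl
  intro w _
  by_cases hok : okF h w
  · cases hw : w 0
    · rw [if_pos hok, if_neg (by simp), if_pos ⟨hok, rfl⟩, zero_add]
    · rw [if_pos hok, if_pos ⟨hok, rfl⟩, if_neg (by simp), add_zero]
  · rw [if_neg hok, if_neg (by tauto), if_neg (by tauto), add_zero]

lemma GPT_eq (h l : ℕ) : GPT h l = GP (h + 1) l := by
  rw [GPT, GP, sum_cons]
  have h2 : (∑ v : Fin l → Bool,
      if okF h (Fin.cons false v) ∧ (Fin.cons false v : Fin (l+1) → Bool) 0 = true
      then (X:Polynomial ℤ) ^ fstF (Fin.cons false v) else 0) = 0 := by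
    apply Finset.sum_eq_zero
    intro v _
    rw [if_neg (by simp [Fin.cons_zero])]
  rw [h2, add_zero]
  apply Finset.sum_congr rfl
  intro v _
  rw [fstF_cons_true]
  by_cases hok : okF (h + 1) v
  · rw [if_pos ⟨(okF_cons_true h v).mpr hok, by simp [Fin.cons_zero]⟩, if_pos hok]
  · rw [if_neg (fun hx => hok ((okF_cons_true h v).mp hx.1)), if_neg hok]

lemma GPF_zero (l : ℕ) : GPF 0 l = 0 := by
  rw [GPF]
  apply Finset.sum_eq_zero
  intro w _
  rw [if_neg]
  rintro ⟨hok, hw⟩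
  have hnot := not_okF_cons_false (Fin.tail w)
  rw [show Fin.cons false (Fin.tail w) = w from by
    rw [← hw]; exact Fin.cons_self_tail w] at hnot
  exact hnot hok

lemma GPF_base (h : ℕ) : GPF (h + 1) 0 = X := by
  rw [GPF, sum_cons]
  have h1 : (∑ v : Fin 0 → Bool,
      if okF (h+1) (Fin.cons true v) ∧ (Fin.cons true v : Fin 1 → Bool) 0 = false
      then (X:Polynomial ℤ) ^ fstF (Fin.cons true v) else 0) = 0 := by
    apply Finset.sum_eq_zero
    intro v _
    rw [if_neg (by simp [Fin.cons_zero])]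
  rw [h1, zero_add, Fintype.sum_unique,
    if_pos ⟨(okF_cons_false h _).mpr (okF_empty h _), by simp [Fin.cons_zero]⟩,
    fstF_cons_false0, pow_one]

lemma GPF_rec (h l : ℕ) :
    GPF (h + 1) (l + 1) = X ^ (l + 2) * GPT h l + X * GPF h l := by
  rw [GPF, sum_cons]
  have h1 : (∑ v : Fin (l+1) → Bool,
      if okF (h+1) (Fin.cons true v) ∧ (Fin.cons true v : Fin (l+2) → Bool) 0 = false
      then (X:Polynomial ℤ) ^ fstF (Fin.cons true v) else 0) = 0 := by
    apply Finset.sum_eq_zero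
    intro v _
    rw [if_neg (by simp [Fin.cons_zero])]
  rw [h1, zero_add, GPT, GPF, Finset.mul_sum, Finset.mul_sum, ← Finset.sum_add_distrib]
  apply Finset.sum_congr rfl
  intro v _
  by_cases hok : okF h v
  · rw [if_pos ⟨(okF_cons_false h v).mpr hok, by simp [Fin.cons_zero]⟩, fstF_cons_false]
    cases hv : v 0
    · rw [if_neg (by simp), if_neg (by simp), if_pos ⟨hok, rfl⟩, mul_zero, zero_add,
        ← pow_succ']
      congr 1
      omega
    · rw [if_pos rfl, if_pos ⟨hok, rfl⟩, if_neg (by simp), mul_zero, add_zero, ← pow_add]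
      congr 1
      omega
  · rw [if_neg (fun hx => hok ((okF_cons_false h v).mp hx.1)), if_neg (by tauto),
      if_neg (by tauto), mul_zero, mul_zero, add_zero]

lemma GP_star (h l : ℕ) :
    GP (h + 1) (l + 2) + X * GP (h + 1) l
      = GP (h + 2) (l + 1) + X ^ (l + 2) * GP (h + 1) l + X * GP h (l + 1) := by
  rw [GP_split (h+1) (l+1), GPT_eq (h+1) (l+1), GPF_rec h l, GPT_eq h l,
    GP_split h l, GPT_eq h l]
  ring

lemma GP_eq_ghat : ∀ l h, GP h l = ghat h l := by
  intro l
  induction l using Nat.strong_induction_on with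
  | _ l ih =>
    match l with
    | 0 =>
      intro h
      rw [GP_zero, ghat]
      have hz : ∀ t ∈ Finset.Icc 1 h,
          (X:Polynomial ℤ) ^ ((0 + t + 1) / 2) * gbP 0 ((0 + t + 1) / 2) = 0 := by
        intro t ht
        rw [Finset.mem_Icc] at ht
        rw [gbP_big 0 ((0 + t + 1)/2) (by omega), mul_zero]
      rw [Finset.sum_congr rfl hz]
      simp
    | 1 =>
      intro h
      rw [GP_split h 0, GPT_eq h 0, GP_zero, ghat]
      have hg : gbP 1 ((1 + 1) / 2) = 1 := by
        rw [show (1+1)/2 = 1 by omega]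
        exact gbP_self 1
      rw [hg]
      cases h with
      | zero => rw [GPF_zero]; simp
      | succ h =>
        rw [GPF_base]
        have hz : ∀ t ∈ Finset.Icc 2 (h + 1),
            (X:Polynomial ℤ) ^ ((1 + t + 1) / 2) * gbP 1 ((1 + t + 1) / 2) = 0 := by
          intro t ht
          rw [Finset.mem_Icc] at ht
          rw [gbP_big 1 ((1 + t + 1)/2) (by omega), mul_zero]
        have hsplit : Finset.Icc 1 (h + 1) = insert 1 (Finset.Icc 2 (h + 1)) := by
          ext i
          simp only [Finset.mem_Icc, Finset.mem_insert]
          omega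
        rw [hsplit, Finset.sum_insert (by simp), Finset.sum_congr rfl hz]
        have h11 : gbP 1 ((1 + 1 + 1) / 2) = 1 := by
          rw [show (1+1+1)/2 = 1 by omega]; exact gbP_self 1
        rw [h11]
        simp
    | l + 2 =>
      intro h
      cases h with
      | zero =>
        rw [GP_split 0 (l+1), GPT_eq 0 (l+1), GPF_zero, add_zero,
          ih (l+1) (by omega) 1, ghat_L0]
      | succ h =>
        have key := GP_star h l
        rw [ih (l+1) (by omega) (h+2), ih l (by omega) (h+1), ih (l+1) (by omega) h] at key
        exact add_right_cancel (key.trans (ghat_rec h l).symm)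

lemma GP_coeff (h l j : ℕ) :
    (GP h l).coeff j
      = ((Finset.univ.filter (fun w : Fin l → Bool => okF h w ∧ fstF w = j)).card : ℤ) := by
  rw [GP, Polynomial.finset_sum_coeff, Finset.card_filter]
  push_cast
  apply Finset.sum_congr rfl
  intro w _
  by_cases hok : okF h w
  · rw [if_pos hok, Polynomial.coeff_X_pow]
    by_cases hj : fstF w = j
    · rw [if_pos (by omega), if_pos ⟨hok, hj⟩]
    · rw [if_neg (by omega), if_neg (by tauto)]
  · rw [if_neg hok, if_neg (by tauto), Polynomial.coeff_zero]

lemma negPath_eq {m : ℕ} (w : Fin m → Bool) : negPath w = countE w m := by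
  rw [negPath, countE]
  congr 1
  apply Finset.filter_congr
  intro t _
  simp [t.isLt]

lemma IsDyckB_iff_okF (n : ℕ) (w : Fin (2 * n) → Bool) : IsDyckB n w ↔ okF 0 w := by
  constructor
  · intro H k; rw [Nat.add_zero]; exact H k
  · intro H k; have := H k; omega

lemma majB_eq (n : ℕ) (w : Fin (2 * n) → Bool) : majB n w = 2 * fstF w := by
  rw [majB, fstF, negPath_eq, dsumF]

lemma main_count (n j : ℕ) :
    ({w : Fin (2 * n) → Bool | IsDyckB n w ∧ majB n w = 2 * j}.ncard : ℤ)
      = (gbP (2 * n) n).coeff j := by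
  have hset : {w : Fin (2 * n) → Bool | IsDyckB n w ∧ majB n w = 2 * j}
      = ↑(Finset.univ.filter (fun w : Fin (2 * n) → Bool => okF 0 w ∧ fstF w = j)) := by
    ext w
    simp only [Set.mem_setOf_eq, Finset.coe_filter, Finset.mem_univ, true_and,
      Set.mem_setOf_eq]
    rw [IsDyckB_iff_okF, majB_eq]
    constructor
    · rintro ⟨h1, h2⟩; exact ⟨h1, by omega⟩
    · rintro ⟨h1, h2⟩; exact ⟨h1, by omega⟩
  rw [hset, Set.ncard_coe_finset, ← GP_coeff, GP_eq_ghat, ghat_zero,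
    show (2 * n + 1) / 2 = n by omega]


/-- The coefficients of `∑_w q^{maj(w)}` over type `B_n` Dyck paths are
symmetric: for every `n ≥ 1` and `0 ≤ k ≤ 2n²`, the number of type `B_n` Dyck
paths with type `B` major index `k` equals the number of those with type `B`
major index `2n² - k`. -/
theorem majB_symmetric (n : ℕ) (hn : 1 ≤ n) (k : ℕ) (hk : k ≤ 2 * n ^ 2) :
    {w : Fin (2 * n) → Bool | IsDyckB n w ∧ majB n w = k}.ncard =
      {w : Fin (2 * n) → Bool | IsDyckB n w ∧ majB n w = 2 * n ^ 2 - k}.ncard := by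
  rcases Nat.even_or_odd k with he | ho
  · -- even case
    obtain ⟨j, rfl⟩ : ∃ j, k = 2 * j := by obtain ⟨c, hc⟩ := he; exact ⟨c, by omega⟩
    have hj : j ≤ n ^ 2 := by omega
    have h2 : 2 * n ^ 2 - 2 * j = 2 * (n ^ 2 - j) := by omega
    rw [h2]
    have c1 := main_count n j
    have c2 := main_count n (n ^ 2 - j)
    have hpal : (gbP (2 * n) n).coeff j = (gbP (2 * n) n).coeff (n ^ 2 - j) := by
      apply gbP_palin (2 * n) n n j (n ^ 2 - j) (by omega)
      have : n * n = n ^ 2 := (pow_two n).symm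
      omega
    have : ({w : Fin (2 * n) → Bool | IsDyckB n w ∧ majB n w = 2 * j}.ncard : ℤ)
        = ({w : Fin (2 * n) → Bool | IsDyckB n w ∧ majB n w = 2 * (n ^ 2 - j)}.ncard : ℤ) := by
      rw [c1, c2, hpal]
    exact_mod_cast this
  · -- odd case: both sets are empty
    have e1 : {w : Fin (2 * n) → Bool | IsDyckB n w ∧ majB n w = k} = ∅ := by
      ext w
      simp only [Set.mem_setOf_eq, Set.mem_empty_iff_false, iff_false]
      rintro ⟨-, hmaj⟩
      rw [majB_eq] at hmaj
      obtain ⟨c, hc⟩ := ho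
      omega
    have e2 : {w : Fin (2 * n) → Bool | IsDyckB n w ∧ majB n w = 2 * n ^ 2 - k} = ∅ := by
      ext w
      simp only [Set.mem_setOf_eq, Set.mem_empty_iff_false, iff_false]
      rintro ⟨-, hmaj⟩
      rw [majB_eq] at hmaj
      obtain ⟨c, hc⟩ := ho
      omega
    rw [e1, e2]

end Stmt
end

section
/- For every n ≥ 1 and every integer k, the number of Dyck paths of length n with area k equals the number of 231-avoiding permutations of {1,…,n} with exactly k inversions; equivalently, Σ_{w ∈ D_n} q^{area(w)} = Σ_{σ ∈ S_n(231)} q^{inv(σ)} (where inv(σ) is the Coxeter length of σ in the symmetric group). -/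
open scoped Classical

namespace Stmt

/-- Number of inversions of a permutation of `{1,…,n}`. -/
def invP {n : ℕ} (σ : Equiv.Perm (Fin n)) : ℕ :=
  (Finset.univ.filter (fun p : Fin n × Fin n => p.1 < p.2 ∧ σ p.2 < σ p.1)).card

/-- Descent set of a permutation, as 1-indexed positions in `{1,…,n-1}`. -/
def permDes {n : ℕ} (σ : Equiv.Perm (Fin n)) : Finset ℕ :=
  (Finset.Ico 1 n).filter (fun i =>
    ∃ h : i < n, σ ⟨i, h⟩ < σ ⟨i - 1, Nat.lt_of_le_of_lt (Nat.sub_le i 1) h⟩)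

def desP {n : ℕ} (σ : Equiv.Perm (Fin n)) : ℕ := (permDes σ).card

def majP {n : ℕ} (σ : Equiv.Perm (Fin n)) : ℕ := ∑ i ∈ permDes σ, i

def imajP {n : ℕ} (σ : Equiv.Perm (Fin n)) : ℕ := majP σ⁻¹

/-- `σ` is 231-avoiding: no `i < j < k` with `σ k < σ i < σ j`. -/
def Avoids231 {n : ℕ} (σ : Equiv.Perm (Fin n)) : Prop :=
  ¬ ∃ i j k : Fin n, i < j ∧ j < k ∧ σ k < σ i ∧ σ i < σ j

theorem card_filter_lt (m k : ℕ) :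
    ((Finset.univ : Finset (Fin m)).filter (fun t : Fin m => (t : ℕ) < k)).card = min k m := by
  classical
  have h : ((Finset.univ : Finset (Fin m)).filter (fun t : Fin m => (t : ℕ) < k)).image (Fin.val)
      = Finset.range (min k m) := by
    ext x
    simp only [Finset.mem_image, Finset.mem_filter, Finset.mem_univ, true_and, Finset.mem_range,
      lt_min_iff]
    constructor
    · rintro ⟨t, ht, rfl⟩; exact ⟨ht, t.isLt⟩
    · rintro ⟨h1, h2⟩; exact ⟨⟨x, h2⟩, h1, rfl⟩
  have := Finset.card_image_of_injective
    ((Finset.univ : Finset (Fin m)).filter (fun t : Fin m => (t : ℕ) < k)) (Fin.val_injective)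
  rw [h] at this
  simpa using this.symm

theorem countN_add_countE {m : ℕ} (w : Fin m → Bool) (k : ℕ) :
    countN w k + countE w k = min k m := by
  classical
  rw [← card_filter_lt m k, countN, countE]
  rw [← Finset.card_union_of_disjoint]
  · congr 1
    ext t
    simp only [Finset.mem_union, Finset.mem_filter, Finset.mem_univ, true_and]
    rcases Bool.eq_false_or_eq_true (w t) with h | h <;> simp [h]
  · rw [Finset.disjoint_left]
    intro t h1 h2
    simp only [Finset.mem_filter, Finset.mem_univ, true_and] at h1 h2
    rw [h1.2] at h2
    exact absurd h2.2 (by simp)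

theorem countN_mono {m : ℕ} (w : Fin m → Bool) {k k' : ℕ} (h : k ≤ k') :
    countN w k ≤ countN w k' := by
  apply Finset.card_le_card
  intro t ht
  simp only [Finset.mem_filter, Finset.mem_univ, true_and] at *
  exact ⟨lt_of_lt_of_le ht.1 h, ht.2⟩

theorem countE_mono {m : ℕ} (w : Fin m → Bool) {k k' : ℕ} (h : k ≤ k') :
    countE w k ≤ countE w k' := by
  apply Finset.card_le_card
  intro t ht
  simp only [Finset.mem_filter, Finset.mem_univ, true_and] at *
  exact ⟨lt_of_lt_of_le ht.1 h, ht.2⟩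

theorem countN_le {m : ℕ} (w : Fin m → Bool) (k : ℕ) : countN w k ≤ k := by
  calc countN w k ≤ countN w k + countE w k := Nat.le_add_right _ _
  _ = min k m := countN_add_countE w k
  _ ≤ k := min_le_left _ _


/-- Condition for a sequence to be a valid "code": `c j ≤ j` and `c (j+1) ≤ c j + 1`. -/
def Cond (n : ℕ) (c : Fin n → ℕ) : Prop :=
  (∀ j : Fin n, c j ≤ (j : ℕ)) ∧
    ∀ (j : ℕ) (h : j + 1 < n), c ⟨j + 1, h⟩ ≤ c ⟨j, by omega⟩ + 1

/-- Position of the `(j+1)`-st north step determined by a code. -/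
def tpos {n : ℕ} (c : Fin n → ℕ) (j : Fin n) : ℕ := 2 * j - c j

theorem tpos_strictMono {n : ℕ} {c : Fin n → ℕ} (hc : Cond n c) : StrictMono (tpos c) := by
  have step : ∀ (j : ℕ) (h : j + 1 < n), tpos c ⟨j, by omega⟩ < tpos c ⟨j + 1, h⟩ := by
    intro j h
    have h1 := hc.1 ⟨j, by omega⟩
    have h2 := hc.1 ⟨j + 1, h⟩
    have h3 := hc.2 j h
    simp only [tpos, Fin.val_mk] at *
    omega
  have key : ∀ (b a : ℕ) (ha : a < n) (hb : b < n), a < b →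
      tpos c ⟨a, ha⟩ < tpos c ⟨b, hb⟩ := by
    intro b
    induction b with
    | zero => intro a ha hb h; omega
    | succ b ih =>
        intro a ha hb h
        rcases Nat.lt_or_ge a b with h' | h'
        · exact lt_trans (ih a ha (by omega) h') (step b hb)
        · have : a = b := by omega
          subst this
          exact step a hb
  intro j1 j2 hlt
  have := key j2 j1 j1.isLt j2.isLt hlt
  simpa using this

theorem tpos_le {n : ℕ} {c : Fin n → ℕ} (hc : Cond n c) (j : Fin n) :
    (j : ℕ) ≤ tpos c j ∧ tpos c j ≤ 2 * j := by
  have := hc.1 j; simp only [tpos]; omega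

/-- The Dyck path associated with a code. -/
def pat (n : ℕ) (c : Fin n → ℕ) : Fin (2 * n) → Bool :=
  fun t => decide (∃ j : Fin n, (t : ℕ) = tpos c j)

theorem pat_eq_true_iff {n : ℕ} {c : Fin n → ℕ} (t : Fin (2 * n)) :
    pat n c t = true ↔ ∃ j : Fin n, (t : ℕ) = tpos c j := by
  simp [pat]

theorem countN_pat {n : ℕ} {c : Fin n → ℕ} (hc : Cond n c) (k : ℕ) :
    countN (pat n c) k = ((Finset.univ : Finset (Fin n)).filter
      (fun j => tpos c j < k)).card := by
  classical
  symm
  apply Finset.card_bij (fun (j : Fin n) (_ : j ∈ Finset.univ.filter (fun j => tpos c j < k)) =>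
    (⟨tpos c j, by have := tpos_le hc j; omega⟩ : Fin (2 * n)))
  · intro j hj
    simp only [Finset.mem_filter, Finset.mem_univ, true_and] at hj ⊢
    exact ⟨hj, by rw [pat_eq_true_iff]; exact ⟨j, rfl⟩⟩
  · intro j1 h1 j2 h2 he
    have : tpos c j1 = tpos c j2 := by simpa using congrArg Fin.val he
    exact (tpos_strictMono hc).injective this
  · intro t ht
    simp only [Finset.mem_filter, Finset.mem_univ, true_and] at ht
    obtain ⟨hk, hw⟩ := ht
    obtain ⟨j, hj⟩ := (pat_eq_true_iff t).1 hw
    refine ⟨j, by simp only [Finset.mem_filter, Finset.mem_univ, true_and]; omega, ?_⟩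
    ext; simp [hj]

theorem mem_downward {n : ℕ} (S : Finset (Fin n))
    (hdc : ∀ a b : Fin n, b ≤ a → a ∈ S → b ∈ S) (j : Fin n) :
    j ∈ S ↔ (j : ℕ) < S.card := by
  constructor
  · intro hj
    have hsub : Finset.Iic j ⊆ S := fun b hb => hdc j b (Finset.mem_Iic.1 hb) hj
    have := Finset.card_le_card hsub
    rw [Fin.card_Iic] at this
    omega
  · intro hj
    by_contra hns
    have hsub : S ⊆ Finset.Iio j := by
      intro a ha
      rw [Finset.mem_Iio]
      by_contra hle
      exact hns (hdc a j (le_of_not_gt hle) ha)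
    have := Finset.card_le_card hsub
    rw [Fin.card_Iio] at this
    omega

theorem tpos_lt_iff {n : ℕ} {c : Fin n → ℕ} (hc : Cond n c) (k : ℕ) (j : Fin n) :
    tpos c j < k ↔ (j : ℕ) < countN (pat n c) k := by
  rw [countN_pat hc]
  have hdc : ∀ a b : Fin n, b ≤ a →
      a ∈ Finset.univ.filter (fun j => tpos c j < k) →
      b ∈ Finset.univ.filter (fun j => tpos c j < k) := by
    intro a b hba ha
    simp only [Finset.mem_filter, Finset.mem_univ, true_and] at *
    rcases eq_or_lt_of_le hba with h | h
    · rwa [h]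
    · exact lt_trans (tpos_strictMono hc h) ha
  have := mem_downward _ hdc j
  simp only [Finset.mem_filter, Finset.mem_univ, true_and] at this
  exact this


theorem countN_pat_le {n : ℕ} {c : Fin n → ℕ} (hc : Cond n c) (k : ℕ) :
    countN (pat n c) k ≤ n := by
  rw [countN_pat hc]
  exact le_trans (Finset.card_filter_le _ _) (by simp)

theorem isDyckA_pat {n : ℕ} {c : Fin n → ℕ} (hc : Cond n c) : IsDyckA n (pat n c) := by
  constructor
  · rw [countN_pat hc]
    have : (Finset.univ : Finset (Fin n)).filter (fun j => tpos c j < 2 * n) =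
        Finset.univ := by
      apply Finset.filter_true_of_mem
      intro j _
      have := (tpos_le hc j).2
      have := j.isLt
      omega
    rw [this]; simp
  · intro k
    have hsum := countN_add_countE (pat n c) k
    have : min k (2 * n) ≤ 2 * countN (pat n c) k := by
      rcases Nat.lt_or_ge (countN (pat n c) k) n with hm | hm
      · have hnot : ¬ tpos c ⟨countN (pat n c) k, hm⟩ < k := by
          rw [tpos_lt_iff hc]
          simp
        have := (tpos_le hc ⟨countN (pat n c) k, hm⟩).2
        simp only [Fin.val_mk] at this
        omega
      · omega
    omega

theorem countN_pat_tpos_succ {n : ℕ} {c : Fin n → ℕ} (hc : Cond n c) (j : Fin n) :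
    countN (pat n c) (tpos c j + 1) = j + 1 := by
  have h1 : (j : ℕ) < countN (pat n c) (tpos c j + 1) := by
    rw [← tpos_lt_iff hc]; omega
  rcases Nat.lt_or_ge ((j : ℕ) + 1) n with h | h
  · have h2 : ¬ ((⟨(j : ℕ) + 1, h⟩ : Fin n) : ℕ) < countN (pat n c) (tpos c j + 1) := by
      rw [← tpos_lt_iff hc]
      have := tpos_strictMono hc (show j < ⟨(j : ℕ) + 1, h⟩ by simp [Fin.lt_def])
      omega
    simp only [Fin.val_mk] at h2
    omega
  · have h2 := countN_pat_le hc (tpos c j + 1)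
    have := j.isLt
    omega

theorem countE_pat_tpos_succ {n : ℕ} {c : Fin n → ℕ} (hc : Cond n c) (j : Fin n) :
    countE (pat n c) (tpos c j + 1) = (j : ℕ) - c j := by
  have h1 := countN_add_countE (pat n c) (tpos c j + 1)
  have h2 := countN_pat_tpos_succ hc j
  have h3 := (tpos_le hc j).2
  have h4 := (tpos_le hc j).1
  have h5 := j.isLt
  have h6 := hc.1 j
  simp only [tpos] at *
  omega

theorem cellBelow_pat_iff {n : ℕ} {c : Fin n → ℕ} (hc : Cond n c) (i j' : ℕ) (hi : 1 ≤ i) :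
    CellBelow (pat n c) i j' ∧ 1 ≤ j' ↔
      ∃ j : Fin n, j' = (j : ℕ) + 1 ∧ (j : ℕ) - c j < i := by
  constructor
  · rintro ⟨⟨k, hE, hN⟩, hj'⟩
    have hub := countN_pat_le hc k
    have hjn : j' - 1 < n := by omega
    set j : Fin n := ⟨j' - 1, hjn⟩ with hj
    have hlt : tpos c j < k := by
      rw [tpos_lt_iff hc]
      simp only [hj, Fin.val_mk]
      omega
    refine ⟨j, by simp [hj]; omega, ?_⟩
    have hmono := countE_mono (pat n c) (show tpos c j + 1 ≤ k by omega)
    rw [countE_pat_tpos_succ hc j] at hmono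
    omega
  · rintro ⟨j, rfl, hlt⟩
    refine ⟨⟨tpos c j + 1, ?_, ?_⟩, by omega⟩
    · rw [countE_pat_tpos_succ hc j]; omega
    · rw [countN_pat_tpos_succ hc j]

theorem area_pat {n : ℕ} {c : Fin n → ℕ} (hc : Cond n c) :
    areaA (pat n c) = ∑ j : Fin n, c j := by
  classical
  have hset : {p : ℕ × ℕ | 1 ≤ p.1 ∧ p.1 < p.2 ∧ CellBelow (pat n c) p.1 p.2} =
      ↑((Finset.univ : Finset (Fin n)).biUnion
        (fun j => (Finset.Ioc ((j : ℕ) - c j) (j : ℕ)) ×ˢ ({(j : ℕ) + 1} : Finset ℕ))) := by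
    ext ⟨i, j'⟩
    simp only [Set.mem_setOf_eq, Finset.coe_biUnion, Set.mem_iUnion, Finset.mem_coe,
      Finset.mem_product, Finset.mem_Ioc, Finset.mem_singleton, Finset.mem_univ, true_and]
    constructor
    · rintro ⟨h1, h2, h3⟩
      obtain ⟨j, rfl, hlt⟩ := (cellBelow_pat_iff hc i _ h1).1 ⟨h3, by omega⟩
      exact ⟨j, trivial, ⟨hlt, by omega⟩, rfl⟩
    · rintro ⟨j, -, ⟨hlt, hle⟩, rfl⟩
      refine ⟨by omega, by omega, ?_⟩
      exact ((cellBelow_pat_iff hc i _ (by omega)).2 ⟨j, rfl, hlt⟩).1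
  rw [areaA, hset, Set.ncard_coe_finset]
  rw [Finset.card_biUnion]
  · apply Finset.sum_congr rfl
    intro j _
    rw [Finset.card_product, Nat.card_Ioc]
    have := hc.1 j
    simp
    omega
  · intro a _ b _ hab
    simp only [Finset.disjoint_left]
    rintro ⟨i, j'⟩ ha hb
    simp only [Finset.mem_product, Finset.mem_singleton] at ha hb
    apply hab
    ext
    omega


theorem countN_pat_tpos {n : ℕ} {c : Fin n → ℕ} (hc : Cond n c) (j : Fin n) :
    countN (pat n c) (tpos c j) = (j : ℕ) := by
  have h1 : ¬ ((j : ℕ) < countN (pat n c) (tpos c j)) := by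
    rw [← tpos_lt_iff hc]; omega
  rcases Nat.lt_or_ge (countN (pat n c) (tpos c j)) n with h | h
  · set m0 := countN (pat n c) (tpos c j) with hm0
    have h2 : ¬ (tpos c (⟨m0, h⟩ : Fin n) < tpos c j) := by
      rw [tpos_lt_iff hc, ← hm0]; simp
    by_contra hne
    have hlt : ((⟨m0, h⟩ : Fin n) : ℕ) < (j : ℕ) := by simp; omega
    exact h2 (tpos_strictMono hc (by rwa [Fin.lt_def]))
  · have := j.isLt; omega

theorem pat_injOn {n : ℕ} {c c' : Fin n → ℕ} (hc : Cond n c) (hc' : Cond n c')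
    (h : pat n c = pat n c') : c = c' := by
  have htpos : ∀ j : Fin n, tpos c j = tpos c' j := by
    intro j
    have h1 := countN_pat_tpos hc j
    have h2 := countN_pat_tpos hc' j
    rw [← h] at h2
    by_contra hne
    rcases Nat.lt_or_ge (tpos c j) (tpos c' j) with hlt | hge
    · have := (tpos_lt_iff hc (tpos c' j) j).1 hlt
      omega
    · have hlt : tpos c' j < tpos c j := by omega
      have := (tpos_lt_iff hc' (tpos c j) j).1 hlt
      rw [← h] at this
      omega
  funext j
  have := htpos j
  have h1 := hc.1 j
  have h2 := hc'.1 j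
  simp only [tpos] at this
  omega

theorem pat_surjOn {n : ℕ} {w : Fin (2 * n) → Bool} (hw : IsDyckA n w) :
    ∃ c : Fin n → ℕ, Cond n c ∧ pat n c = w := by
  classical
  have hcard : ((Finset.univ : Finset (Fin (2 * n))).filter
      (fun t : Fin (2 * n) => w t = true)).card = n := by
    have : (Finset.univ : Finset (Fin (2 * n))).filter (fun t : Fin (2 * n) => w t = true) =
        (Finset.univ : Finset (Fin (2 * n))).filter
          (fun t : Fin (2 * n) => (t : ℕ) < 2 * n ∧ w t = true) := by
      apply Finset.filter_congr
      intro t _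
      simp [t.isLt]
    rw [this]
    exact hw.1
  set S := (Finset.univ : Finset (Fin (2 * n))).filter (fun t : Fin (2 * n) => w t = true)
    with hS
  set e := S.orderIsoOfFin hcard with he
  set τ : Fin n → ℕ := fun j => ((e j : Fin (2 * n)) : ℕ) with hτ
  have hτmono : StrictMono τ := by
    intro j1 j2 hlt
    have : e j1 < e j2 := by exact e.strictMono hlt
    exact this
  have hwτ : ∀ j : Fin n, w (e j : Fin (2 * n)) = true := by
    intro j
    exact (Finset.mem_filter.1 (e j).2).2
  have hcountN : ∀ j : Fin n, countN w (τ j) = (j : ℕ) := by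
    intro j
    have hbij : countN w (τ j) = ((Finset.univ : Finset (Fin n)).filter
        (fun j2 : Fin n => (j2 : ℕ) < (j : ℕ))).card := by
      rw [countN]
      symm
      apply Finset.card_bij (fun (j2 : Fin n) _ => (e j2 : Fin (2 * n)))
      · intro j2 hj2
        simp only [Finset.mem_filter, Finset.mem_univ, true_and] at hj2 ⊢
        exact ⟨hτmono (by rwa [Fin.lt_def]), hwτ j2⟩
      · intro a _ b _ hab
        exact e.injective (Subtype.ext hab)
      · intro t ht
        simp only [Finset.mem_filter, Finset.mem_univ, true_and] at ht
        have hmem : t ∈ S := by rw [hS, Finset.mem_filter]; exact ⟨Finset.mem_univ _, ht.2⟩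
        refine ⟨e.symm ⟨t, hmem⟩, ?_, ?_⟩
        · simp only [Finset.mem_filter, Finset.mem_univ, true_and]
          have hval : ((e (e.symm ⟨t, hmem⟩) : Fin (2 * n)) : ℕ) = (t : ℕ) := by simp
          have hlt : τ (e.symm ⟨t, hmem⟩) < τ j := by
            show ((e (e.symm ⟨t, hmem⟩) : Fin (2 * n)) : ℕ) < τ j
            rw [hval]; exact ht.1
          exact hτmono.lt_iff_lt.1 hlt
        · simp
    rw [hbij, card_filter_lt]
    have := j.isLt
    omega
  have hτle : ∀ j : Fin n, (j : ℕ) ≤ τ j ∧ τ j ≤ 2 * (j : ℕ) := by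
    intro j
    have h1 : (j : ℕ) ≤ τ j := by
      have := countN_le w (τ j)
      rw [hcountN j] at this
      exact this
    refine ⟨h1, ?_⟩
    have h2 := hw.2 (τ j)
    have h3 := countN_add_countE w (τ j)
    rw [hcountN j] at h2 h3
    have h4 : τ j < 2 * n := (e j : Fin (2 * n)).isLt
    omega
  refine ⟨fun j => 2 * (j : ℕ) - τ j, ⟨⟨?_, ?_⟩, ?_⟩⟩
  · intro j
    have := hτle j
    dsimp only
    omega
  · intro j hj
    have h1 := hτle ⟨j, by omega⟩
    have h2 := hτle ⟨j + 1, hj⟩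
    have h3 : τ ⟨j, by omega⟩ < τ ⟨j + 1, hj⟩ := hτmono (by rw [Fin.lt_def]; simp)
    simp only [Fin.val_mk] at h1 h2
    dsimp only
    omega
  · funext t
    have htpos : ∀ j : Fin n, tpos (fun j => 2 * (j : ℕ) - τ j) j = τ j := by
      intro j
      have := hτle j
      show 2 * (j : ℕ) - (2 * (j : ℕ) - τ j) = τ j
      omega
    rcases Bool.eq_false_or_eq_true (w t) with h | h
    · rw [h]
      rw [pat_eq_true_iff]
      have hmem : t ∈ S := by rw [hS, Finset.mem_filter]; exact ⟨Finset.mem_univ _, h⟩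
      refine ⟨e.symm ⟨t, hmem⟩, ?_⟩
      rw [htpos]
      show (t : ℕ) = ((e (e.symm ⟨t, hmem⟩) : Fin (2 * n)) : ℕ)
      simp
    · rw [h]
      have hne : ¬ (pat n (fun j => 2 * (j : ℕ) - τ j) t = true) := by
        rw [pat_eq_true_iff]
        rintro ⟨j, hj⟩
        rw [htpos j] at hj
        have ht : t = (e j : Fin (2 * n)) := by ext; exact hj
        rw [ht, hwτ j] at h
        exact Bool.noConfusion h
      simpa using hne

theorem dyck_card_eq_code {n : ℕ} (k : ℕ) :
    {w : Fin (2 * n) → Bool | IsDyckA n w ∧ areaA w = k}.ncard =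
      {c : Fin n → ℕ | Cond n c ∧ ∑ j : Fin n, c j = k}.ncard := by
  have himg : (pat n) '' {c : Fin n → ℕ | Cond n c ∧ ∑ j : Fin n, c j = k} =
      {w : Fin (2 * n) → Bool | IsDyckA n w ∧ areaA w = k} := by
    ext w
    simp only [Set.mem_image, Set.mem_setOf_eq]
    constructor
    · rintro ⟨c, ⟨hc, hsum⟩, rfl⟩
      exact ⟨isDyckA_pat hc, by rw [area_pat hc]; exact hsum⟩
    · rintro ⟨hdyck, harea⟩
      obtain ⟨c, hc, rfl⟩ := pat_surjOn hdyck
      exact ⟨c, ⟨hc, by rw [← area_pat hc]; exact harea⟩, rfl⟩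
  rw [← himg]
  apply Set.ncard_image_of_injOn
  intro c1 h1 c2 h2 he
  exact pat_injOn h1.1 h2.1 he

theorem succAbove_val {n : ℕ} (m : Fin (n + 1)) (v : Fin n) :
    ((m.succAbove v : Fin (n + 1)) : ℕ) =
      if (v : ℕ) < (m : ℕ) then (v : ℕ) else (v : ℕ) + 1 := by
  rw [Fin.succAbove]
  split_ifs with h1 h2 h2 <;> simp_all [Fin.lt_def, Fin.castSucc, Fin.succ]

/-- Extension of a permutation of `Fin n` to `Fin (n+1)` sending the last
position to value `m` and relabelling the other values monotonically. -/
def extP {n : ℕ} (m : Fin (n + 1)) (τ : Equiv.Perm (Fin n)) : Equiv.Perm (Fin (n + 1)) :=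
  (finSuccEquiv' (Fin.last n)).trans ((Equiv.optionCongr τ).trans (finSuccEquiv' m).symm)

theorem extP_last {n : ℕ} (m : Fin (n + 1)) (τ : Equiv.Perm (Fin n)) :
    extP m τ (Fin.last n) = m := by
  simp [extP]

theorem extP_castSucc {n : ℕ} (m : Fin (n + 1)) (τ : Equiv.Perm (Fin n)) (j : Fin n) :
    extP m τ (Fin.castSucc j) = m.succAbove (τ j) := by
  have h1 : finSuccEquiv' (Fin.last n) (Fin.castSucc j) = some j := by
    have := finSuccEquiv'_succAbove (Fin.last n) j
    rwa [Fin.succAbove_last] at this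
  simp [extP, h1, finSuccEquiv'_symm_some]

theorem extP_surj {n : ℕ} (σ : Equiv.Perm (Fin (n + 1))) :
    ∃ (m : Fin (n + 1)) (τ : Equiv.Perm (Fin n)), σ = extP m τ := by
  set m := σ (Fin.last n) with hm
  set ρ : Option (Fin n) ≃ Option (Fin n) :=
    ((finSuccEquiv' (Fin.last n)).symm.trans (σ.trans (finSuccEquiv' m))) with hρ
  have hρnone : ρ none = none := by
    simp [hρ, hm, finSuccEquiv'_symm_none]
  set τ := Equiv.removeNone ρ with hτ
  refine ⟨m, τ, ?_⟩
  apply Equiv.ext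
  intro i
  induction i using Fin.lastCases with
  | last => rw [extP_last, hm]
  | cast j =>
      rw [extP_castSucc]
      have hsome : ρ (some j) = some (τ j) := by
        have hne : ρ (some j) ≠ none := by
          intro hcon
          have := ρ.injective (hcon.trans hρnone.symm)
          exact Option.some_ne_none j this
        obtain ⟨y, hy⟩ := Option.ne_none_iff_exists'.1 hne
        have := Equiv.removeNone_some ρ ⟨y, hy⟩
        rw [hτ]
        exact this.symm
      have hρj : ρ (some j) = finSuccEquiv' m (σ (Fin.castSucc j)) := by
        simp only [hρ, Equiv.trans_apply]
        congr 1
        congr 1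
        have := finSuccEquiv'_succAbove (Fin.last n) j
        rw [Fin.succAbove_last] at this
        exact (Equiv.symm_apply_eq _).2 this.symm
      rw [hρj] at hsome
      have := congrArg (finSuccEquiv' m).symm hsome
      rw [Equiv.symm_apply_apply, finSuccEquiv'_symm_some] at this
      exact this


theorem card_filter_le_val {n : ℕ} (m : ℕ) (hm : m ≤ n) :
    ((Finset.univ : Finset (Fin n)).filter (fun v : Fin n => m ≤ (v : ℕ))).card = n - m := by
  classical
  have h1 := Finset.card_filter_add_card_filter_not
    (s := (Finset.univ : Finset (Fin n))) (p := fun v : Fin n => (v : ℕ) < m)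
  have h2 : (Finset.univ : Finset (Fin n)).filter (fun v : Fin n => ¬ (v : ℕ) < m) =
      (Finset.univ : Finset (Fin n)).filter (fun v : Fin n => m ≤ (v : ℕ)) := by
    apply Finset.filter_congr; intro v _; simp [Nat.not_lt]
  rw [h2] at h1
  rw [card_filter_lt] at h1
  simp only [Finset.card_univ, Fintype.card_fin] at h1
  omega

theorem invP_extP {n : ℕ} (m : Fin (n + 1)) (τ : Equiv.Perm (Fin n)) :
    invP (extP m τ) = invP τ + (n - (m : ℕ)) := by
  classical
  set σ := extP m τ with hσ
  have hvals : ∀ i j : Fin n, (σ (Fin.castSucc j) < σ (Fin.castSucc i)) ↔ τ j < τ i := by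
    intro i j
    rw [hσ, extP_castSucc, extP_castSucc]
    rw [Fin.lt_def, Fin.lt_def, succAbove_val, succAbove_val]
    split_ifs <;> omega
  have hlast : ∀ i : Fin n, (σ (Fin.last n) < σ (Fin.castSucc i)) ↔ (m : ℕ) ≤ ((τ i) : ℕ) := by
    intro i
    rw [hσ, extP_castSucc, extP_last]
    rw [Fin.lt_def, succAbove_val]
    split_ifs <;> omega
  set F1 := ((Finset.univ : Finset (Fin n × Fin n)).filter
    (fun p => p.1 < p.2 ∧ τ p.2 < τ p.1)).image
      (fun p => (Fin.castSucc p.1, Fin.castSucc p.2)) with hF1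
  set F2 := ((Finset.univ : Finset (Fin n)).filter
    (fun i => (m : ℕ) ≤ ((τ i) : ℕ))).image
      (fun i => (Fin.castSucc i, Fin.last n)) with hF2
  have hFeq : (Finset.univ : Finset (Fin (n+1) × Fin (n+1))).filter
      (fun p => p.1 < p.2 ∧ σ p.2 < σ p.1) = F1 ∪ F2 := by
    ext ⟨p1, p2⟩
    simp only [Finset.mem_filter, Finset.mem_univ, true_and, Finset.mem_union, hF1, hF2,
      Finset.mem_image, Prod.mk.injEq]
    constructor
    · rintro ⟨hlt, hval⟩
      induction p2 using Fin.lastCases with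
      | last =>
          induction p1 using Fin.lastCases with
          | last => exact absurd hlt (lt_irrefl _)
          | cast i =>
              right
              exact ⟨i, by rwa [← hlast i], rfl, rfl⟩
      | cast j =>
          induction p1 using Fin.lastCases with
          | last =>
              exact absurd (lt_trans hlt (Fin.castSucc_lt_last j)) (lt_irrefl _)
          | cast i =>
              left
              refine ⟨(i, j), ?_, rfl, rfl⟩
              simp only [Finset.mem_filter, Finset.mem_univ, true_and]
              exact ⟨Fin.castSucc_lt_castSucc_iff.1 hlt, (hvals i j).1 hval⟩
    · rintro (⟨⟨i, j⟩, hmem, rfl, rfl⟩ | ⟨i, hmem, rfl, rfl⟩)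
      · have hmem' : i < j ∧ τ j < τ i := by simpa using hmem
        exact ⟨Fin.castSucc_lt_castSucc_iff.2 hmem'.1, (hvals i j).2 hmem'.2⟩
      · have hmem' : (m : ℕ) ≤ ((τ i) : ℕ) := by simpa using hmem
        exact ⟨Fin.castSucc_lt_last i, (hlast i).2 hmem'⟩
  rw [invP, hFeq, Finset.card_union_of_disjoint]
  · congr 1
    · rw [hF1, Finset.card_image_of_injective, invP]
      intro p q hpq
      simp only [Prod.mk.injEq] at hpq
      ext
      · exact congrArg Fin.val (Fin.castSucc_injective n hpq.1)
      · exact congrArg Fin.val (Fin.castSucc_injective n hpq.2)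
    · rw [hF2, Finset.card_image_of_injective]
      · have hbij : ((Finset.univ : Finset (Fin n)).filter
            (fun i => (m : ℕ) ≤ ((τ i) : ℕ))).card =
            ((Finset.univ : Finset (Fin n)).filter
              (fun v : Fin n => (m : ℕ) ≤ (v : ℕ))).card := by
          apply Finset.card_bij (fun i _ => τ i)
          · intro i hi
            simp only [Finset.mem_filter, Finset.mem_univ, true_and] at *
            exact hi
          · intro a _ b _ h
            exact τ.injective h
          · intro v hv
            refine ⟨τ.symm v, ?_, by simp⟩
            simp only [Finset.mem_filter, Finset.mem_univ, true_and] at *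
            simpa using hv
        rw [hbij, card_filter_le_val]
        exact Fin.is_le m
      · intro a b hab
        simp only [Prod.mk.injEq] at hab
        exact Fin.castSucc_injective n hab.1
  · rw [Finset.disjoint_left]
    rintro ⟨p1, p2⟩ h1 h2
    rw [hF1] at h1
    rw [hF2] at h2
    simp only [Finset.mem_image, Prod.mk.injEq] at h1 h2
    obtain ⟨⟨i, j⟩, -, -, hj⟩ := h1
    obtain ⟨i2, -, -, hl⟩ := h2
    rw [← hl] at hj
    exact absurd (congrArg Fin.val hj) (by simp [Fin.last]; omega)


theorem avoids_extP {n : ℕ} (m : Fin (n + 2)) (τ : Equiv.Perm (Fin (n + 1))) :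
    Avoids231 (extP m τ) ↔ Avoids231 τ ∧ ((τ (Fin.last n) : ℕ) ≤ (m : ℕ)) := by
  classical
  set σ := extP m τ with hσ
  have hvals : ∀ i j : Fin (n + 1), (σ (Fin.castSucc i) < σ (Fin.castSucc j)) ↔ τ i < τ j := by
    intro i j
    rw [hσ, extP_castSucc, extP_castSucc, Fin.lt_def, Fin.lt_def, succAbove_val, succAbove_val]
    split_ifs <;> omega
  have hlastv : ∀ i : Fin (n + 1), (σ (Fin.last (n + 1)) < σ (Fin.castSucc i)) ↔
      (m : ℕ) ≤ ((τ i) : ℕ) := by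
    intro i
    rw [hσ, extP_castSucc, extP_last, Fin.lt_def, succAbove_val]
    split_ifs <;> omega
  constructor
  · intro hA
    have hB : ¬ ∃ i j : Fin (n + 1), i < j ∧ (m : ℕ) ≤ ((τ i) : ℕ) ∧ τ i < τ j := by
      rintro ⟨i, j, hij, h1, h2⟩
      exact hA ⟨Fin.castSucc i, Fin.castSucc j, Fin.last (n + 1),
        Fin.castSucc_lt_castSucc_iff.2 hij, Fin.castSucc_lt_last j,
        (hlastv i).2 h1, (hvals i j).2 h2⟩
    constructor
    · rintro ⟨i, j, k, hij, hjk, h1, h2⟩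
      exact hA ⟨Fin.castSucc i, Fin.castSucc j, Fin.castSucc k,
        Fin.castSucc_lt_castSucc_iff.2 hij, Fin.castSucc_lt_castSucc_iff.2 hjk,
        (hvals k i).2 h1, (hvals i j).2 h2⟩
    · by_contra hgt
      push_neg at hgt
      have hmlt : (m : ℕ) < n + 1 := by
        have := (τ (Fin.last n)).isLt
        omega
      set p := τ.symm ⟨(m : ℕ), hmlt⟩ with hp
      have hτp : ((τ p : Fin (n + 1)) : ℕ) = (m : ℕ) := by rw [hp]; simp
      have hpne : p ≠ Fin.last n := by
        intro hcon
        rw [hcon] at hτp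
        omega
      have hplt : p < Fin.last n := lt_of_le_of_ne (Fin.le_last p) hpne
      exact hB ⟨p, Fin.last n, hplt, by omega, by rw [Fin.lt_def]; omega⟩
  · rintro ⟨hAτ, hle⟩
    rintro ⟨i, j, k, hij, hjk, h1, h2⟩
    induction k using Fin.lastCases with
    | cast k' =>
        have hjne : j ≠ Fin.last (n + 1) := by
          intro hcon
          rw [hcon] at hjk
          exact absurd (lt_trans hjk (Fin.castSucc_lt_last k')) (lt_irrefl _)
        have hine : i ≠ Fin.last (n + 1) := by
          intro hcon
          rw [hcon] at hij
          exact absurd (lt_trans (lt_trans hij hjk) (Fin.castSucc_lt_last k')) (lt_irrefl _)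
        obtain ⟨i', rfl⟩ := Fin.exists_castSucc_eq.mpr hine
        obtain ⟨j', rfl⟩ := Fin.exists_castSucc_eq.mpr hjne
        exact hAτ ⟨i', j', k', Fin.castSucc_lt_castSucc_iff.1 hij,
          Fin.castSucc_lt_castSucc_iff.1 hjk, (hvals k' i').1 h1, (hvals i' j').1 h2⟩
    | last =>
        have hjne : j ≠ Fin.last (n + 1) := ne_of_lt hjk
        have hine : i ≠ Fin.last (n + 1) := ne_of_lt (lt_trans hij hjk)
        obtain ⟨i', rfl⟩ := Fin.exists_castSucc_eq.mpr hine
        obtain ⟨j', rfl⟩ := Fin.exists_castSucc_eq.mpr hjne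
        have hm1 : (m : ℕ) ≤ ((τ i') : ℕ) := (hlastv i').1 h1
        have hm2 : τ i' < τ j' := (hvals i' j').1 h2
        have hj'ne : j' ≠ Fin.last n := by
          intro hcon
          rw [hcon] at hm2
          rw [Fin.lt_def] at hm2
          omega
        have hi'ne : i' ≠ Fin.last n := by
          intro hcon
          have : τ i' = τ (Fin.last n) := by rw [hcon]
          rw [Fin.lt_def] at hm2
          have hij' : i' < j' := Fin.castSucc_lt_castSucc_iff.1 hij
          have := Fin.lt_def.1 hij'
          rw [hcon] at hij'
          exact absurd (lt_of_le_of_lt (Fin.le_last j') hij') (lt_irrefl _)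
        have hτlast : (τ (Fin.last n) : ℕ) < (τ i' : ℕ) := by
          have hne : τ (Fin.last n) ≠ τ i' := fun hcon => hi'ne (τ.injective hcon).symm
          have : (τ (Fin.last n) : ℕ) ≠ (τ i' : ℕ) := fun hcon => hne (Fin.ext hcon)
          omega
        have hj'lt : j' < Fin.last n := lt_of_le_of_ne (Fin.le_last j') hj'ne
        exact hAτ ⟨i', j', Fin.last n, Fin.castSucc_lt_castSucc_iff.1 hij, hj'lt,
          by rw [Fin.lt_def]; omega, hm2⟩


/-- Decoding a code sequence into a (231-avoiding) permutation. -/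
def decP : (n : ℕ) → (Fin n → ℕ) → Equiv.Perm (Fin n)
  | 0, _ => Equiv.refl _
  | (n + 1), c => extP ⟨n - c (Fin.last n), by omega⟩ (decP n (fun j => c (Fin.castSucc j)))

theorem decP_succ {n : ℕ} (c : Fin (n + 1) → ℕ) :
    decP (n + 1) c = extP ⟨n - c (Fin.last n), by omega⟩
      (decP n (fun j => c (Fin.castSucc j))) := rfl

theorem cond_restrict {n : ℕ} {c : Fin (n + 1) → ℕ} (hc : Cond (n + 1) c) :
    Cond n (fun j => c (Fin.castSucc j)) := by
  constructor
  · intro j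
    have := hc.1 (Fin.castSucc j)
    simpa using this
  · intro j h
    have := hc.2 j (by omega)
    have e1 : Fin.castSucc (⟨j + 1, h⟩ : Fin n) = (⟨j + 1, by omega⟩ : Fin (n + 1)) := rfl
    have e2 : Fin.castSucc (⟨j, by omega⟩ : Fin n) = (⟨j, by omega⟩ : Fin (n + 1)) := rfl
    simpa [e1, e2] using this

theorem decP_last {n : ℕ} (c : Fin (n + 1) → ℕ) :
    ((decP (n + 1) c (Fin.last n)) : ℕ) = n - c (Fin.last n) := by
  rw [decP_succ, extP_last]

theorem invP_decP {n : ℕ} {c : Fin n → ℕ} (hc : Cond n c) :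
    invP (decP n c) = ∑ j : Fin n, c j := by
  induction n with
  | zero =>
      rw [invP]
      simp
  | succ n ih =>
      rw [decP_succ, invP_extP, ih (cond_restrict hc), Fin.sum_univ_castSucc]
      have h1 := hc.1 (Fin.last n)
      simp only [Fin.val_last] at h1
      simp only [Fin.val_mk]
      omega

theorem avoids_decP {n : ℕ} {c : Fin n → ℕ} (hc : Cond n c) :
    Avoids231 (decP n c) := by
  induction n with
  | zero =>
      rintro ⟨i, j, k, -⟩
      exact i.elim0
  | succ n ih =>
      match n with
      | 0 =>
          rintro ⟨i, j, k, hij, hjk, -⟩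
          rw [Fin.lt_def] at hij hjk
          have := i.isLt
          have := j.isLt
          have := k.isLt
          omega
      | Nat.succ n' =>
          rw [decP_succ, avoids_extP]
          refine ⟨ih (cond_restrict hc), ?_⟩
          rw [decP_last]
          have h1 := hc.1 (Fin.last (n' + 1))
          have h2 := hc.2 n' (by omega)
          have h3 : (Fin.castSucc (Fin.last n') : Fin (n' + 2)) = ⟨n', by omega⟩ := rfl
          have h4 : (Fin.last (n' + 1) : Fin (n' + 2)) = ⟨n' + 1, by omega⟩ := rfl
          simp only [Fin.val_last] at h1
          simp only [Fin.val_mk, h3, h4] at *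
          omega

theorem decP_inj {n : ℕ} {c c' : Fin n → ℕ} (hc : Cond n c) (hc' : Cond n c')
    (h : decP n c = decP n c') : c = c' := by
  induction n with
  | zero => funext j; exact j.elim0
  | succ n ih =>
      have hlastv : c (Fin.last n) = c' (Fin.last n) := by
        have h1 := congrArg (fun σ => ((σ (Fin.last n) : Fin (n + 1)) : ℕ)) h
        rw [decP_last, decP_last] at h1
        have := hc.1 (Fin.last n)
        have := hc'.1 (Fin.last n)
        simp only [Fin.val_last] at *
        omega
      have hrest : (fun j => c (Fin.castSucc j)) = (fun j => c' (Fin.castSucc j)) := by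
        apply ih (cond_restrict hc) (cond_restrict hc')
        rw [decP_succ, decP_succ] at h
        have hm : (⟨n - c (Fin.last n), by omega⟩ : Fin (n + 1)) =
            ⟨n - c' (Fin.last n), by omega⟩ := by
          apply Fin.ext
          simp only [Fin.val_mk]
          rw [hlastv]
        rw [hm] at h
        apply Equiv.ext
        intro j
        have happ := congrArg (fun σ => σ (Fin.castSucc j)) h
        simp only [extP_castSucc] at happ
        exact Fin.succAbove_right_injective happ
      funext j
      induction j using Fin.lastCases with
      | last => exact hlastv
      | cast j' => exact congrFun hrest j'

theorem decP_last' {n : ℕ} (hn : 0 < n) (c : Fin n → ℕ) :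
    ((decP n c ⟨n - 1, by omega⟩ : Fin n) : ℕ) = (n - 1) - c ⟨n - 1, by omega⟩ := by
  match n, hn with
  | Nat.succ n'', _ =>
      have h : (⟨n'' + 1 - 1, by omega⟩ : Fin (n'' + 1)) = Fin.last n'' := by
        apply Fin.ext; simp
      rw [h, decP_last]
      omega

theorem decP_surj {n : ℕ} {σ : Equiv.Perm (Fin n)} (hσ : Avoids231 σ) :
    ∃ c : Fin n → ℕ, Cond n c ∧ decP n c = σ := by
  induction n with
  | zero =>
      refine ⟨fun _ => 0, ⟨fun j => j.elim0, fun j h => by omega⟩, ?_⟩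
      apply Equiv.ext
      intro x
      exact x.elim0
  | succ n ih =>
      obtain ⟨m, τ, rfl⟩ := extP_surj σ
      have hτavoid : Avoids231 τ ∧ (n = 0 ∨ ∀ h : 0 < n, ((τ ⟨n - 1, by omega⟩ : Fin n) : ℕ) ≤ (m : ℕ)) := by
        match n, m, τ with
        | 0, m, τ =>
            refine ⟨?_, Or.inl rfl⟩
            rintro ⟨i, -⟩
            exact i.elim0
        | Nat.succ n', m, τ =>
            have := (avoids_extP m τ).1 hσ
            refine ⟨this.1, Or.inr fun _ => ?_⟩
            have h2 := this.2
            have : (⟨n' + 1 - 1, by omega⟩ : Fin (n' + 1)) = Fin.last n' := by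
              apply Fin.ext; simp
            rw [this]
            exact h2
      obtain ⟨c', hc', hdec⟩ := ih hτavoid.1
      set c : Fin (n + 1) → ℕ := fun j => if h : (j : ℕ) < n then c' ⟨(j : ℕ), h⟩
        else n - (m : ℕ) with hcdef
      have hclast : c (Fin.last n) = n - (m : ℕ) := by
        rw [hcdef]; simp
      have hccast : (fun j => c (Fin.castSucc j)) = c' := by
        funext j
        rw [hcdef]
        simp [j.isLt]
      refine ⟨c, ⟨?_, ?_⟩, ?_⟩
      · intro j
        rcases Nat.lt_or_ge (j : ℕ) n with h | h
        · rw [hcdef]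
          simp only [h, dif_pos]
          exact hc'.1 ⟨(j : ℕ), h⟩
        · have hj : (j : ℕ) = n := by have := j.isLt; omega
          rw [hcdef]
          simp only
          rw [dif_neg (by omega)]
          omega
      · intro j h
        rcases Nat.lt_or_ge (j + 1) n with h2 | h2
        · have e1 : c ⟨j + 1, h⟩ = c' ⟨j + 1, h2⟩ := by rw [hcdef]; simp [h2]
          have e2 : c ⟨j, by omega⟩ = c' ⟨j, by omega⟩ := by rw [hcdef]; simp [show j < n by omega]
          rw [e1, e2]
          exact hc'.2 j h2
        · have hj : j + 1 = n := by omega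
          have hn1 : 0 < n := by omega
          have e1 : c ⟨j + 1, h⟩ = n - (m : ℕ) := by
            rw [hcdef]
            simp only [Fin.val_mk]
            rw [dif_neg (by omega)]
          have e2 : c ⟨j, by omega⟩ = c' ⟨j, by omega⟩ := by
            rw [hcdef]
            simp only [Fin.val_mk]
            rw [dif_pos (by omega)]
          rw [e1, e2]
          have hτlast := (hτavoid.2.resolve_left (by omega)) hn1
          rw [← hdec, decP_last' hn1] at hτlast
          have hje : (⟨n - 1, by omega⟩ : Fin n) = ⟨j, by omega⟩ := by
            apply Fin.ext; simp only [Fin.val_mk]; omega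
          rw [hje] at hτlast
          have hle := hc'.1 ⟨j, by omega⟩
          have hmle : (m : ℕ) ≤ n := Fin.is_le m
          simp only [Fin.val_mk] at *
          omega
      · rw [decP_succ, hccast, hdec]
        congr 1
        apply Fin.ext
        simp only [Fin.val_mk]
        rw [hclast]
        have : (m : ℕ) ≤ n := Fin.is_le m
        omega


theorem perm_card_eq_code {n : ℕ} (k : ℕ) :
    {σ : Equiv.Perm (Fin n) | Avoids231 σ ∧ invP σ = k}.ncard =
      {c : Fin n → ℕ | Cond n c ∧ ∑ j : Fin n, c j = k}.ncard := by
  have himg : (decP n) '' {c : Fin n → ℕ | Cond n c ∧ ∑ j : Fin n, c j = k} =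
      {σ : Equiv.Perm (Fin n) | Avoids231 σ ∧ invP σ = k} := by
    ext σ
    simp only [Set.mem_image, Set.mem_setOf_eq]
    constructor
    · rintro ⟨c, ⟨hc, hsum⟩, rfl⟩
      exact ⟨avoids_decP hc, by rw [invP_decP hc]; exact hsum⟩
    · rintro ⟨havoid, hinv⟩
      obtain ⟨c, hc, rfl⟩ := decP_surj havoid
      exact ⟨c, ⟨hc, by rw [← invP_decP hc]; exact hinv⟩, rfl⟩
  rw [← himg]
  apply Set.ncard_image_of_injOn
  intro c1 h1 c2 h2 he
  exact decP_inj h1.1 h2.1 he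


/-- For every `n ≥ 1` and every `k`, Dyck paths of length `n` with area `k` are
equinumerous with 231-avoiding permutations of `{1,…,n}` with `k` inversions. -/
theorem area_eq_inv_231 (n : ℕ) (hn : 1 ≤ n) (k : ℕ) :
    {w : Fin (2 * n) → Bool | IsDyckA n w ∧ areaA w = k}.ncard =
      {σ : Equiv.Perm (Fin n) | Avoids231 σ ∧ invP σ = k}.ncard := by
  rw [dyck_card_eq_code k, perm_card_eq_code k]

end Stmt
end
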